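/- Let E_λ be the qubit depolarizing channel and let ψ = √q₀·|00⟩ + √q₁·|11⟩ with q₀, q₁ ≥ 0, q₀ + q₁ = 1. Then the partial transpose (transposition on the second qubit) of the two-qubit state (E_λ⊗E_λ)[|ψ⟩⟨ψ|] has eigenvalues μ₁ = (1−λ)²/4 + λq₀, μ₂ = (1−λ)²/4 + λq₁, and μ± = (1 − λ² ± 4λ²√(q₀q₁))/4; in particular the partial transpose is positive semidefinite if and only if 1 − λ² − 4λ²√(q₀q₁) ≥ 0. -/

import Mathlib

open Matrix
open scoped Kronecker ComplexOrder

/-- A quantum state: a positive semidefinite matrix of unit trace. -/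
def IsState {ι : Type} [Fintype ι] (ρ : Matrix ι ι ℂ) : Prop :=
  ρ.PosSemidef ∧ ρ.trace = 1

/-- Separability of a bipartite state across the `ιA | ιB` cut: a finite convex
combination of Kronecker products of states. -/
def IsSep {ιA ιB : Type} [Fintype ιA] [Fintype ιB]
    (ω : Matrix (ιA × ιB) (ιA × ιB) ℂ) : Prop :=
  ∃ (m : ℕ) (p : Fin m → ℝ) (ξ : Fin m → Matrix ιA ιA ℂ) (ζ : Fin m → Matrix ιB ιB ℂ),
    (∀ j, 0 ≤ p j) ∧ ((∑ j, p j) = 1) ∧ (∀ j, IsState (ξ j)) ∧ (∀ j, IsState (ζ j)) ∧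
    ω = ∑ j, (p j : ℂ) • (ξ j ⊗ₖ ζ j)

/-- The extension `E ⊗ id` of a map `E` by a trivial action on an `n`-dimensional ancilla. -/
def tensorId {ι : Type} (E : Matrix ι ι ℂ → Matrix ι ι ℂ) (n : ℕ)
    (X : Matrix (ι × Fin n) (ι × Fin n) ℂ) : Matrix (ι × Fin n) (ι × Fin n) ℂ :=
  Matrix.of fun p q => E (Matrix.of fun a c => X (a, p.2) (c, q.2)) p.1 q.1

/-- A quantum channel: a linear, trace-preserving, completely positive map. -/
def IsChannel {ι : Type} [Fintype ι] (E : Matrix ι ι ℂ → Matrix ι ι ℂ) : Prop :=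
  (∀ (c : ℂ) (X Y : Matrix ι ι ℂ), E (c • X + Y) = c • E X + E Y) ∧
  (∀ X, (E X).trace = X.trace) ∧
  (∀ (n : ℕ) (X : Matrix (ι × Fin n) (ι × Fin n) ℂ), X.PosSemidef → (tensorId E n X).PosSemidef)

/-- Entanglement-breaking channel: `E ⊗ id` maps every state to a separable state,
for every ancilla dimension `n ≥ 1`. -/
def IsEB {ι : Type} [Fintype ι] (E : Matrix ι ι ℂ → Matrix ι ι ℂ) : Prop :=
  ∀ (n : ℕ), 0 < n → ∀ ω : Matrix (ι × Fin n) (ι × Fin n) ℂ,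
    IsState ω → IsSep (tensorId E n ω)

/-- Entanglement-annihilating channel on a bipartite system: every state is mapped
to a separable state. -/
def IsEA {ιA ιB : Type} [Fintype ιA] [Fintype ιB]
    (E : Matrix (ιA × ιB) (ιA × ιB) ℂ → Matrix (ιA × ιB) (ιA × ιB) ℂ) : Prop :=
  ∀ ω : Matrix (ιA × ιB) (ιA × ιB) ℂ, IsState ω → IsSep (E ω)

/-- The map `F ⊗ id` acting as `F` on the first factor of a bipartite system. -/
def rTensor {ιA ιB : Type} (F : Matrix ιA ιA ℂ → Matrix ιA ιA ℂ)
    (X : Matrix (ιA × ιB) (ιA × ιB) ℂ) : Matrix (ιA × ιB) (ιA × ιB) ℂ :=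
  Matrix.of fun p q => F (Matrix.of fun a c => X (a, p.2) (c, q.2)) p.1 q.1

/-- The map `id ⊗ F` acting as `F` on the second factor of a bipartite system. -/
def lTensor {ιA ιB : Type} (F : Matrix ιB ιB ℂ → Matrix ιB ιB ℂ)
    (X : Matrix (ιA × ιB) (ιA × ιB) ℂ) : Matrix (ιA × ιB) (ιA × ιB) ℂ :=
  Matrix.of fun p q => F (Matrix.of fun b d => X (p.1, b) (q.1, d)) p.2 q.2

/-- The local map `E ⊗ F` on a bipartite system (for linear `E`, `F` this is the
usual tensor product map `(id ⊗ F) ∘ (E ⊗ id)`). -/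
def tensorMap {ιA ιB : Type} (E : Matrix ιA ιA ℂ → Matrix ιA ιA ℂ)
    (F : Matrix ιB ιB ℂ → Matrix ιB ιB ℂ)
    (X : Matrix (ιA × ιB) (ιA × ιB) ℂ) : Matrix (ιA × ιB) (ιA × ιB) ℂ :=
  lTensor F (rTensor E X)

/-- `k`-fold Kronecker product of single-particle matrices. -/
def kronPow {d k : ℕ} (ρ : Fin k → Matrix (Fin d) (Fin d) ℂ) :
    Matrix (Fin k → Fin d) (Fin k → Fin d) ℂ :=
  Matrix.of fun i j => ∏ t, ρ t (i t) (j t)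

/-- Full separability of a `k`-partite state: a finite convex combination of
`k`-fold Kronecker products of single-particle states. -/
def IsFullySep {d k : ℕ} (ω : Matrix (Fin k → Fin d) (Fin k → Fin d) ℂ) : Prop :=
  ∃ (m : ℕ) (p : Fin m → ℝ) (ρ : Fin m → Fin k → Matrix (Fin d) (Fin d) ℂ),
    (∀ j, 0 ≤ p j) ∧ ((∑ j, p j) = 1) ∧ (∀ j t, IsState (ρ j t)) ∧
    ω = ∑ j, (p j : ℂ) • kronPow (ρ j)

/-- The map applying `E` to the `t`-th particle of a `k`-partite system. -/
def applyAt {d k : ℕ} (E : Matrix (Fin d) (Fin d) ℂ → Matrix (Fin d) (Fin d) ℂ) (t : Fin k)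
    (X : Matrix (Fin k → Fin d) (Fin k → Fin d) ℂ) :
    Matrix (Fin k → Fin d) (Fin k → Fin d) ℂ :=
  Matrix.of fun i j =>
    E (Matrix.of fun a b => X (Function.update i t a) (Function.update j t b)) (i t) (j t)

/-- The `k`-fold tensor power `E ⊗ ⋯ ⊗ E` of a single-particle map `E`,
obtained by applying `E` to each of the `k` particles. -/
def tensorPow {d : ℕ} (E : Matrix (Fin d) (Fin d) ℂ → Matrix (Fin d) (Fin d) ℂ) (k : ℕ)
    (X : Matrix (Fin k → Fin d) (Fin k → Fin d) ℂ) :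
    Matrix (Fin k → Fin d) (Fin k → Fin d) ℂ :=
  (List.finRange k).foldr (applyAt E) X

/-- The qubit depolarizing channel `E_λ[X] = λ X + (1-λ) tr(X) I/2`. -/
noncomputable def depol (lam : ℝ) (X : Matrix (Fin 2) (Fin 2) ℂ) : Matrix (Fin 2) (Fin 2) ℂ :=
  (lam : ℂ) • X + ((1 - lam : ℝ) : ℂ) • X.trace • ((2 : ℂ)⁻¹ • (1 : Matrix (Fin 2) (Fin 2) ℂ))

/-- The maximally entangled two-qubit vector `(|00⟩ + |11⟩)/√2`. -/
noncomputable def psiPlus : (Fin 2 × Fin 2) → ℂ :=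
  fun p => if p.1 = p.2 then ((Real.sqrt 2 : ℝ) : ℂ)⁻¹ else 0

/-- The projection onto the maximally entangled two-qubit vector. -/
noncomputable def Pplus : Matrix (Fin 2 × Fin 2) (Fin 2 × Fin 2) ℂ :=
  Matrix.vecMulVec psiPlus (star psiPlus)

/-- Partial transposition on the second qubit of a two-qubit matrix. -/
def ptB (X : Matrix (Fin 2 × Fin 2) (Fin 2 × Fin 2) ℂ) :
    Matrix (Fin 2 × Fin 2) (Fin 2 × Fin 2) ℂ :=
  Matrix.of fun p q => X (p.1, q.2) (q.1, p.2)

/-- Partial transposition on the first factor (qubit 1 versus qubits 2,3). -/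
def pt1 (X : Matrix (Fin 2 × Fin 2 × Fin 2) (Fin 2 × Fin 2 × Fin 2) ℂ) :
    Matrix (Fin 2 × Fin 2 × Fin 2) (Fin 2 × Fin 2 × Fin 2) ℂ :=
  Matrix.of fun p q => X (q.1, p.2) (p.1, q.2)

/-- The three-qubit GHZ vector `(|000⟩ + |111⟩)/√2`. -/
noncomputable def ghzVec : (Fin 2 × Fin 2 × Fin 2) → ℂ :=
  fun p => if p.1 = p.2.1 ∧ p.2.1 = p.2.2 then ((Real.sqrt 2 : ℝ) : ℂ)⁻¹ else 0

/-- The three-qubit GHZ state `|GHZ⟩⟨GHZ|`. -/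
noncomputable def ghzState : Matrix (Fin 2 × Fin 2 × Fin 2) (Fin 2 × Fin 2 × Fin 2) ℂ :=
  Matrix.vecMulVec ghzVec (star ghzVec)




/-- The Schmidt-form two-qubit vector `√q₀ |00⟩ + √q₁ |11⟩`. -/
noncomputable def schmidtVec (q₀ q₁ : ℝ) : (Fin 2 × Fin 2) → ℂ :=
  fun p => if p = (0, 0) then ((Real.sqrt q₀ : ℝ) : ℂ)
    else if p = (1, 1) then ((Real.sqrt q₁ : ℝ) : ℂ) else 0

section Aux
set_option maxHeartbeats 1000000
noncomputable def entG (d0 c f d1 : ℝ) : Matrix (Fin 2 × Fin 2) (Fin 2 × Fin 2) ℂ := fun p q =>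
  if p = ((0:Fin 2),(0:Fin 2)) ∧ q = (0,0) then (d0:ℂ)
  else if (p=(0,1)∧q=(0,1)) ∨ (p=(1,0)∧q=(1,0)) then (c:ℂ)
  else if (p=(0,1)∧q=(1,0)) ∨ (p=(1,0)∧q=(0,1)) then (f:ℂ)
  else if p=(1,1)∧q=(1,1) then (d1:ℂ)
  else 0

def e00 : (Fin 2 × Fin 2) → ℂ := fun p => if p = (0,0) then 1 else 0
def e11 : (Fin 2 × Fin 2) → ℂ := fun p => if p = (1,1) then 1 else 0
def vpl : (Fin 2 × Fin 2) → ℂ := fun p => if p = (0,1) then 1 else if p = (1,0) then 1 else 0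
def vmi : (Fin 2 × Fin 2) → ℂ := fun p => if p = (0,1) then 1 else if p = (1,0) then -1 else 0

lemma mv_e00 (d0 c f d1 : ℝ) : (entG d0 c f d1).mulVec e00 = (d0:ℂ) • e00 := by
  have e2 : ∀ i : Fin 2, i = 0 ∨ i = 1 := by decide
  funext ⟨i,j⟩
  rcases e2 i with rfl|rfl <;> rcases e2 j with rfl|rfl <;>
    simp [entG, e00, Matrix.mulVec, dotProduct, Fintype.sum_prod_type,
      Fin.sum_univ_two, Prod.ext_iff]

lemma mv_e11 (d0 c f d1 : ℝ) : (entG d0 c f d1).mulVec e11 = (d1:ℂ) • e11 := by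
  have e2 : ∀ i : Fin 2, i = 0 ∨ i = 1 := by decide
  funext ⟨i,j⟩
  rcases e2 i with rfl|rfl <;> rcases e2 j with rfl|rfl <;>
    simp [entG, e11, Matrix.mulVec, dotProduct, Fintype.sum_prod_type,
      Fin.sum_univ_two, Prod.ext_iff]

lemma mv_vpl (d0 c f d1 : ℝ) : (entG d0 c f d1).mulVec vpl = ((c+f : ℝ):ℂ) • vpl := by
  have e2 : ∀ i : Fin 2, i = 0 ∨ i = 1 := by decide
  funext ⟨i,j⟩
  rcases e2 i with rfl|rfl <;> rcases e2 j with rfl|rfl <;>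
  · simp [entG, vpl, Matrix.mulVec, dotProduct, Fintype.sum_prod_type,
      Fin.sum_univ_two, Prod.ext_iff]
    try push_cast
    try ring

lemma mv_vmi (d0 c f d1 : ℝ) : (entG d0 c f d1).mulVec vmi = ((c-f : ℝ):ℂ) • vmi := by
  have e2 : ∀ i : Fin 2, i = 0 ∨ i = 1 := by decide
  funext ⟨i,j⟩
  rcases e2 i with rfl|rfl <;> rcases e2 j with rfl|rfl <;>
  · simp [entG, vmi, Matrix.mulVec, dotProduct, Fintype.sum_prod_type,
      Fin.sum_univ_two, Prod.ext_iff]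
    try push_cast
    try ring

lemma entG_herm (d0 c f d1 : ℝ) : (entG d0 c f d1).IsHermitian := by
  have e2 : ∀ i : Fin 2, i = 0 ∨ i = 1 := by decide
  ext ⟨i,j⟩ ⟨k,l⟩
  rcases e2 i with rfl|rfl <;> rcases e2 j with rfl|rfl <;>
    rcases e2 k with rfl|rfl <;> rcases e2 l with rfl|rfl <;>
    simp [entG, Matrix.conjTranspose_apply, Prod.ext_iff]

lemma entG_psd (d0 c f d1 : ℝ) (h0 : 0 ≤ d0) (h1 : 0 ≤ d1) (hf : 0 ≤ f) (hcf : f ≤ c) :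
    (entG d0 c f d1).PosSemidef := by
  refine Matrix.PosSemidef.of_dotProduct_mulVec_nonneg (entG_herm d0 c f d1) fun x => ?_
  have hx : star x ⬝ᵥ (entG d0 c f d1).mulVec x =
      (starRingEnd ℂ) (x (0,0)) * ((d0:ℂ) * x (0,0)) +
      (starRingEnd ℂ) (x (0,1)) * ((c:ℂ) * x (0,1) + (f:ℂ) * x (1,0)) +
      (starRingEnd ℂ) (x (1,0)) * ((f:ℂ) * x (0,1) + (c:ℂ) * x (1,0)) +
      (starRingEnd ℂ) (x (1,1)) * ((d1:ℂ) * x (1,1)) := by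
    simp [entG, Matrix.mulVec, dotProduct, Fintype.sum_prod_type,
      Fin.sum_univ_two, Prod.ext_iff]
    ring
  rw [hx]
  set a := x (0,0); set b := x (0,1); set cc := x (1,0); set dd := x (1,1)
  rw [Complex.le_def]
  constructor
  · simp only [Complex.add_re, Complex.mul_re, Complex.conj_re, Complex.conj_im,
      Complex.add_im, Complex.mul_im, Complex.ofReal_re, Complex.ofReal_im,
      Complex.zero_re]
    nlinarith [mul_nonneg h0 (add_nonneg (sq_nonneg a.re) (sq_nonneg a.im)),
      mul_nonneg h1 (add_nonneg (sq_nonneg dd.re) (sq_nonneg dd.im)),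
      mul_nonneg (sub_nonneg.2 hcf) (add_nonneg (add_nonneg (sq_nonneg b.re) (sq_nonneg b.im)) (add_nonneg (sq_nonneg cc.re) (sq_nonneg cc.im))),
      mul_nonneg hf (sq_nonneg (b.re + cc.re)), mul_nonneg hf (sq_nonneg (b.im + cc.im))]
  · simp only [Complex.add_im, Complex.add_re, Complex.mul_im, Complex.mul_re,
      Complex.conj_re, Complex.conj_im, Complex.ofReal_re, Complex.ofReal_im,
      Complex.zero_im]
    ring

lemma psd_implies (d0 c f d1 : ℝ) (h : (entG d0 c f d1).PosSemidef) : f ≤ c := by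
  have h2 := h.dotProduct_mulVec_nonneg vmi
  rw [mv_vmi] at h2
  have : star vmi ⬝ᵥ (((c-f:ℝ):ℂ) • vmi) = ((c-f:ℝ):ℂ) * 2 := by
    simp [vmi, dotProduct, Fintype.sum_prod_type, Fin.sum_univ_two, Prod.ext_iff]
    ring
  rw [this] at h2
  have : (0:ℂ) ≤ (((c-f)*2 : ℝ):ℂ) := by push_cast; convert h2 using 2; push_cast; ring
  rw [Complex.zero_le_real] at this
  linarith

theorem key (lam q₀ q₁ : ℝ) :
    ptB (tensorMap (depol lam) (depol lam)
      (Matrix.vecMulVec (schmidtVec q₀ q₁) (star (schmidtVec q₀ q₁)))) =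
    entG (lam^2*(Real.sqrt q₀)^2 + lam*(1-lam)*(Real.sqrt q₀)^2
            + (1-lam)^2*((Real.sqrt q₀)^2+(Real.sqrt q₁)^2)/4)
         (lam*(1-lam)*((Real.sqrt q₀)^2+(Real.sqrt q₁)^2)/2
            + (1-lam)^2*((Real.sqrt q₀)^2+(Real.sqrt q₁)^2)/4)
         (lam^2*(Real.sqrt q₀*Real.sqrt q₁))
         (lam^2*(Real.sqrt q₁)^2 + lam*(1-lam)*(Real.sqrt q₁)^2
            + (1-lam)^2*((Real.sqrt q₀)^2+(Real.sqrt q₁)^2)/4) := by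
  have e2 : ∀ i : Fin 2, i = 0 ∨ i = 1 := by decide
  ext ⟨i,j⟩ ⟨k,l⟩
  rcases e2 i with rfl|rfl <;> rcases e2 j with rfl|rfl <;>
    rcases e2 k with rfl|rfl <;> rcases e2 l with rfl|rfl <;>
  · simp only [entG, ptB, tensorMap, lTensor, rTensor, depol, schmidtVec,
      Matrix.trace_fin_two, Matrix.vecMulVec_apply, Matrix.one_apply,
      Matrix.of_apply, Matrix.add_apply, Matrix.smul_apply, Pi.star_apply,
      smul_eq_mul, RCLike.star_def, Complex.conj_ofReal]
    norm_num [Prod.ext_iff]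
    try push_cast
    try ring

end Aux

/-- the partial transpose of `(E_λ ⊗ E_λ)[|ψ⟩⟨ψ|]` for
`ψ = √q₀|00⟩ + √q₁|11⟩` has eigenvalues `μ₁`, `μ₂`, `μ₊`, `μ₋`, and is positive
semidefinite iff `1 - λ² - 4λ²√(q₀q₁) ≥ 0`. -/
theorem stmt_14 (lam q₀ q₁ : ℝ) (h0 : 0 ≤ lam) (h1 : lam ≤ 1)
    (hq₀ : 0 ≤ q₀) (hq₁ : 0 ≤ q₁) (hq : q₀ + q₁ = 1) :
    (∃ v : (Fin 2 × Fin 2) → ℂ, v ≠ 0 ∧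
      (ptB (tensorMap (depol lam) (depol lam)
        (Matrix.vecMulVec (schmidtVec q₀ q₁) (star (schmidtVec q₀ q₁))))).mulVec v
        = (((1 - lam) ^ 2 / 4 + lam * q₀ : ℝ) : ℂ) • v) ∧
    (∃ v : (Fin 2 × Fin 2) → ℂ, v ≠ 0 ∧
      (ptB (tensorMap (depol lam) (depol lam)
        (Matrix.vecMulVec (schmidtVec q₀ q₁) (star (schmidtVec q₀ q₁))))).mulVec v
        = (((1 - lam) ^ 2 / 4 + lam * q₁ : ℝ) : ℂ) • v) ∧
    (∃ v : (Fin 2 × Fin 2) → ℂ, v ≠ 0 ∧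
      (ptB (tensorMap (depol lam) (depol lam)
        (Matrix.vecMulVec (schmidtVec q₀ q₁) (star (schmidtVec q₀ q₁))))).mulVec v
        = (((1 - lam ^ 2 + 4 * lam ^ 2 * Real.sqrt (q₀ * q₁)) / 4 : ℝ) : ℂ) • v) ∧
    (∃ v : (Fin 2 × Fin 2) → ℂ, v ≠ 0 ∧
      (ptB (tensorMap (depol lam) (depol lam)
        (Matrix.vecMulVec (schmidtVec q₀ q₁) (star (schmidtVec q₀ q₁))))).mulVec v
        = (((1 - lam ^ 2 - 4 * lam ^ 2 * Real.sqrt (q₀ * q₁)) / 4 : ℝ) : ℂ) • v) ∧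
    ((ptB (tensorMap (depol lam) (depol lam)
        (Matrix.vecMulVec (schmidtVec q₀ q₁) (star (schmidtVec q₀ q₁))))).PosSemidef ↔
      0 ≤ 1 - lam ^ 2 - 4 * lam ^ 2 * Real.sqrt (q₀ * q₁)) := by
  
  have hA2 : Real.sqrt q₀ ^ 2 = q₀ := Real.sq_sqrt hq₀
  have hB2 : Real.sqrt q₁ ^ 2 = q₁ := Real.sq_sqrt hq₁
  have hAB : Real.sqrt q₀ * Real.sqrt q₁ = Real.sqrt (q₀ * q₁) := (Real.sqrt_mul hq₀ q₁).symm
  have hs : Real.sqrt q₀ ^ 2 + Real.sqrt q₁ ^ 2 = 1 := by rw [hA2, hB2]; exact hq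
  have hsqnn : 0 ≤ Real.sqrt (q₀ * q₁) := Real.sqrt_nonneg _
  have hM : ptB (tensorMap (depol lam) (depol lam)
      (Matrix.vecMulVec (schmidtVec q₀ q₁) (star (schmidtVec q₀ q₁)))) =
      entG ((1-lam)^2/4 + lam*q₀) ((1-lam^2)/4) (lam^2 * Real.sqrt (q₀*q₁))
        ((1-lam)^2/4 + lam*q₁) := by
    have e1 : lam^2*(Real.sqrt q₀)^2 + lam*(1-lam)*(Real.sqrt q₀)^2
        + (1-lam)^2*((Real.sqrt q₀)^2+(Real.sqrt q₁)^2)/4 = (1-lam)^2/4 + lam*q₀ := by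
      linear_combination lam * hA2 + ((1-lam)^2/4) * hs
    have e2 : lam*(1-lam)*((Real.sqrt q₀)^2+(Real.sqrt q₁)^2)/2
        + (1-lam)^2*((Real.sqrt q₀)^2+(Real.sqrt q₁)^2)/4 = (1-lam^2)/4 := by
      linear_combination (lam*(1-lam)/2 + (1-lam)^2/4) * hs
    have e3 : lam^2*(Real.sqrt q₀*Real.sqrt q₁) = lam^2 * Real.sqrt (q₀*q₁) := by
      linear_combination lam^2 * hAB
    have e4 : lam^2*(Real.sqrt q₁)^2 + lam*(1-lam)*(Real.sqrt q₁)^2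
        + (1-lam)^2*((Real.sqrt q₀)^2+(Real.sqrt q₁)^2)/4 = (1-lam)^2/4 + lam*q₁ := by
      linear_combination lam * hB2 + ((1-lam)^2/4) * hs
    rw [key lam q₀ q₁, e1, e2, e3, e4]
  rw [hM]
  refine ⟨⟨e00, ?_, ?_⟩, ⟨e11, ?_, ?_⟩, ⟨vpl, ?_, ?_⟩, ⟨vmi, ?_, ?_⟩, ?_⟩
  · intro h; simpa [e00] using congrFun h (0,0)
  · exact mv_e00 _ _ _ _
  · intro h; simpa [e11] using congrFun h (1,1)
  · exact mv_e11 _ _ _ _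
  · intro h; simpa [vpl] using congrFun h (0,1)
  · rw [mv_vpl, show ((1-lam^2)/4 + lam^2 * Real.sqrt (q₀*q₁) : ℝ)
        = ((1 - lam ^ 2 + 4 * lam ^ 2 * Real.sqrt (q₀ * q₁)) / 4 : ℝ) from by ring]
  · intro h; simpa [vmi] using congrFun h (0,1)
  · rw [mv_vmi, show ((1-lam^2)/4 - lam^2 * Real.sqrt (q₀*q₁) : ℝ)
        = ((1 - lam ^ 2 - 4 * lam ^ 2 * Real.sqrt (q₀ * q₁)) / 4 : ℝ) from by ring]
  · constructor
    · intro hp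
      have := psd_implies _ _ _ _ hp
      linarith
    · intro h
      refine entG_psd _ _ _ _ ?_ ?_ ?_ ?_
      · nlinarith [mul_nonneg h0 hq₀]
      · nlinarith [mul_nonneg h0 hq₁]
      · positivity
      · linarith
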